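/- Let L be a lattice and let (u1, v1), (u2, v2) be ordered pairs of L (that is, u1 ≤ v1 and u2 ≤ v2). Then the following three conditions are equivalent: (i) cg(u1, v1) ⊆ cg(u2, v2); (ii) the pair (u1, v1) belongs to the congruence cg(u2, v2); (iii) there exist n ∈ ℕ, elements x_0, …, x_n ∈ L, and ordered pairs (y_{ij}, z_{ij}) of L for all i ∈ {1, …, n} and j ∈ {0, …, n}, such that: u1 = x_0 ≤ x_1 ≤ … ≤ x_{n-1} ≤ x_n = v1; y_{i0} = x_{i-1}, z_{i0} = x_i, y_{in} = u2, and z_{in} = v2 for all 1 ≤ i ≤ n; for all i, j ∈ {1, …, n} with j odd, y_{i,j-1} = z_{i,j-1} ⊓ y_{ij} and z_{i,j-1} ≤ z_{ij}; and for all i, j ∈ {1, …, n} with j even, z_{i,j-1} = y_{i,j-1} ⊔ z_{ij} and y_{i,j-1} ≥ y_{ij}. -/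

import Mathlib

/-- A lattice congruence: an equivalence relation compatible with meet and join. -/
def IsLatCon {L : Type*} [Lattice L] (r : L → L → Prop) : Prop :=
  Equivalence r ∧
  (∀ a b c d, r a b → r c d → r (a ⊓ c) (b ⊓ d)) ∧
  (∀ a b c d, r a b → r c d → r (a ⊔ c) (b ⊔ d))

/-- The principal congruence generated by the pair `(a, b)`:
the smallest congruence relating `a` and `b`. -/
def cg {L : Type*} [Lattice L] (a b : L) (x y : L) : Prop :=
  ∀ r : L → L → Prop, IsLatCon r → r a b → r x y

/-- The ordered set of principal congruences of `L`, ordered by inclusion. -/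
def Princ (L : Type*) [Lattice L] : Type _ :=
  {θ : L → L → Prop // ∃ a b : L, θ = cg a b}

instance (L : Type*) [Lattice L] : PartialOrder (Princ L) :=
  inferInstanceAs (PartialOrder {θ : L → L → Prop // ∃ a b : L, θ = cg a b})

section DilAux
variable {L : Type*} [Lattice L]

/-- Weak projectivity of the pair `(p,q)` into `(u₂,v₂)` in `k` alternating steps. -/
def DilWP (u₂ v₂ : L) (k : ℕ) (p q : L) : Prop :=
  ∃ y z : ℕ → L, y 0 = p ∧ z 0 = q ∧ y k = u₂ ∧ z k = v₂ ∧
    (∀ j ≤ k, y j ≤ z j) ∧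
    (∀ j, 1 ≤ j → j ≤ k → Odd j → y (j-1) = z (j-1) ⊓ y j ∧ z (j-1) ≤ z j) ∧
    (∀ j, 1 ≤ j → j ≤ k → Even j → z (j-1) = y (j-1) ⊔ z j ∧ y j ≤ y (j-1))

variable {u₂ v₂ : L}

lemma DilWP_succ (h : u₂ ≤ v₂) {k : ℕ} {p q : L} (hw : DilWP u₂ v₂ k p q) :
    DilWP u₂ v₂ (k+1) p q := by
  obtain ⟨y, z, h0, h0', hk, hk', hle, hodd, heven⟩ := hw
  refine ⟨fun j => y (min j k), fun j => z (min j k), by simpa using h0,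
    by simpa using h0', ?_, ?_, ?_, ?_, ?_⟩
  · show y (min (k+1) k) = u₂; rw [min_eq_right (Nat.le_succ k), hk]
  · show z (min (k+1) k) = v₂; rw [min_eq_right (Nat.le_succ k), hk']
  · intro j _; exact hle _ (min_le_right _ _)
  · intro j hj1 hj2 hjo
    rcases le_or_gt j k with hjk | hjk
    · have e1 : min j k = j := min_eq_left hjk
      have e2 : min (j-1) k = j - 1 := min_eq_left (by omega)
      simp only [e1, e2]
      exact hodd j hj1 hjk hjo
    · have e1 : min j k = k := min_eq_right (by omega)
      have e2 : min (j-1) k = k := by rw [show j - 1 = k by omega]; simp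
      simp only [e1, e2, hk, hk']
      exact ⟨(inf_eq_right.mpr h).symm, le_rfl⟩
  · intro j hj1 hj2 hje
    rcases le_or_gt j k with hjk | hjk
    · have e1 : min j k = j := min_eq_left hjk
      have e2 : min (j-1) k = j - 1 := min_eq_left (by omega)
      simp only [e1, e2]
      exact heven j hj1 hjk hje
    · have e1 : min j k = k := min_eq_right (by omega)
      have e2 : min (j-1) k = k := by rw [show j - 1 = k by omega]; simp
      simp only [e1, e2, hk, hk']
      exact ⟨(sup_eq_right.mpr h).symm, le_rfl⟩

lemma DilWP_mono (h : u₂ ≤ v₂) {k k' : ℕ} {p q : L} (hkk : k ≤ k')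
    (hw : DilWP u₂ v₂ k p q) : DilWP u₂ v₂ k' p q := by
  induction k' with
  | zero => exact (Nat.le_zero.mp hkk) ▸ hw
  | succ m ih =>
    rcases Nat.lt_or_ge k (m+1) with h' | h'
    · exact DilWP_succ h (ih (by omega))
    · exact (by omega : k = m + 1) ▸ hw

lemma DilWP_zero (h : u₂ ≤ v₂) : DilWP u₂ v₂ 0 u₂ v₂ :=
  ⟨fun _ => u₂, fun _ => v₂, rfl, rfl, rfl, rfl, fun _ _ => h,
    by intro j h1 h2 _; omega, by intro j h1 h2 _; omega⟩

lemma DilWP_self (h : u₂ ≤ v₂) (c : L) : DilWP u₂ v₂ 2 c c := by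
  refine ⟨fun j => match j with | 0 => c | 1 => c ⊔ u₂ | _+2 => u₂,
          fun j => match j with | 0 => c | 1 => c ⊔ v₂ | _+2 => v₂,
          rfl, rfl, rfl, rfl, ?_, ?_, ?_⟩
  · intro j _
    match j with
    | 0 => exact le_rfl
    | 1 => exact sup_le_sup_left h c
    | m+2 => exact h
  · intro j h1 h2 ho
    match j with
    | 1 => exact ⟨inf_sup_self.symm, le_sup_left⟩
    | 2 => exact absurd ho (by decide)
  · intro j h1 h2 he
    match j with
    | 1 => exact absurd he (by decide)
    | 2 => exact ⟨by show c ⊔ v₂ = (c ⊔ u₂) ⊔ v₂; rw [sup_assoc, sup_eq_right.mpr h], le_sup_right⟩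

lemma DilWP_meet {k : ℕ} {p q : L} (hw : DilWP u₂ v₂ k p q) (t : L) :
    DilWP u₂ v₂ (k+2) (p ⊓ t) (q ⊓ t) := by
  obtain ⟨y, z, h0, h0', hk, hk', hle, hodd, heven⟩ := hw
  have hpq : p ≤ q := h0 ▸ h0' ▸ hle 0 (Nat.zero_le _)
  refine ⟨fun j => match j with | 0 => p ⊓ t | 1 => p | m+2 => y m,
          fun j => match j with | 0 => q ⊓ t | 1 => q | m+2 => z m,
          rfl, rfl, hk, hk', ?_, ?_, ?_⟩
  · intro j hj
    match j with
    | 0 => exact inf_le_inf_right t hpq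
    | 1 => exact hpq
    | m+2 => exact hle m (by omega)
  · intro j h1 h2 ho
    match j with
    | 1 => exact ⟨by show p ⊓ t = (q ⊓ t) ⊓ p; rw [inf_right_comm, inf_eq_right.mpr hpq], inf_le_left⟩
    | 2 => exact absurd ho (by decide)
    | m+3 =>
      have ho' : Odd (m+1) := by
        obtain ⟨w, hw⟩ := ho; exact ⟨w - 1, by omega⟩
      exact hodd (m+1) (by omega) (by omega) ho'
  · intro j h1 h2 he
    match j with
    | 1 => exact absurd he (by decide)
    | 2 =>
      refine ⟨?_, h0.le⟩
      show q = p ⊔ z 0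
      rw [h0', sup_eq_right.mpr hpq]
    | m+3 =>
      have he' : Even (m+1) := by
        obtain ⟨w, hw⟩ := he; exact ⟨w - 1, by omega⟩
      exact heven (m+1) (by omega) (by omega) he'

lemma DilWP_join {k : ℕ} {p q : L} (hw : DilWP u₂ v₂ k p q) (t : L) :
    DilWP u₂ v₂ (k+2) (p ⊔ t) (q ⊔ t) := by
  obtain ⟨y, z, h0, h0', hk, hk', hle, hodd, heven⟩ := hw
  have hpq : p ≤ q := h0 ▸ h0' ▸ hle 0 (Nat.zero_le _)
  refine ⟨fun j => match j with | 0 => p ⊔ t | 1 => p ⊔ t | m+2 => y m,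
          fun j => match j with | 0 => q ⊔ t | 1 => q ⊔ t | m+2 => z m,
          rfl, rfl, hk, hk', ?_, ?_, ?_⟩
  · intro j hj
    match j with
    | 0 => exact sup_le_sup_right hpq t
    | 1 => exact sup_le_sup_right hpq t
    | m+2 => exact hle m (by omega)
  · intro j h1 h2 ho
    match j with
    | 1 => exact ⟨(inf_eq_right.mpr (sup_le_sup_right hpq t)).symm, le_rfl⟩
    | 2 => exact absurd ho (by decide)
    | m+3 =>
      have ho' : Odd (m+1) := by
        obtain ⟨w, hw⟩ := ho; exact ⟨w - 1, by omega⟩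
      exact hodd (m+1) (by omega) (by omega) ho'
  · intro j h1 h2 he
    match j with
    | 1 => exact absurd he (by decide)
    | 2 =>
      refine ⟨?_, h0.le.trans le_sup_left⟩
      show q ⊔ t = (p ⊔ t) ⊔ z 0
      rw [h0', sup_right_comm, sup_eq_right.mpr hpq]
    | m+3 =>
      have he' : Even (m+1) := by
        obtain ⟨w, hw⟩ := he; exact ⟨w - 1, by omega⟩
      exact heven (m+1) (by omega) (by omega) he'

/-- `p ≤ q` and there is a chain witnessing `p ≡ q (mod cg u₂ v₂)`. -/
def DilRS (u₂ v₂ : L) (p q : L) : Prop :=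
  ∃ (n : ℕ) (x : ℕ → L), x 0 = p ∧ x n = q ∧ (∀ i < n, x i ≤ x (i+1)) ∧
    ∀ i, 1 ≤ i → i ≤ n → ∃ k, DilWP u₂ v₂ k (x (i-1)) (x i)

lemma DilRS_refl (p : L) : DilRS u₂ v₂ p p :=
  ⟨0, fun _ => p, rfl, rfl, by omega, by intro i h1 h2; omega⟩

lemma DilRS_trans {p q r : L} (h1 : DilRS u₂ v₂ p q) (h2 : DilRS u₂ v₂ q r) :
    DilRS u₂ v₂ p r := by
  obtain ⟨n1, x1, a0, a1, am, aw⟩ := h1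
  obtain ⟨n2, x2, b0, b1, bm, bw⟩ := h2
  refine ⟨n1 + n2, fun i => if i ≤ n1 then x1 i else x2 (i - n1),
    by simp [a0], ?_, ?_, ?_⟩
  · by_cases hn : n1 + n2 ≤ n1
    · have h0 : n2 = 0 := by omega
      simp only [if_pos hn]
      rw [show n1 + n2 = n1 by omega, a1, ← b0, show (0:ℕ) = n2 by omega, b1]
    · simp only [if_neg hn]
      rw [show n1 + n2 - n1 = n2 by omega, b1]
  · intro i hi
    by_cases hi1 : i + 1 ≤ n1
    · simp only [if_pos hi1, if_pos (by omega : i ≤ n1)]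
      exact am i (by omega)
    · by_cases hi2 : i ≤ n1
      · have hin : i = n1 := by omega
        simp only [if_pos hi2, if_neg hi1]
        subst hin
        rw [show i + 1 - i = 1 by omega, a1, ← b0]
        exact bm 0 (by omega)
      · simp only [if_neg hi2, if_neg hi1]
        rw [show i + 1 - n1 = (i - n1) + 1 by omega]
        exact bm (i - n1) (by omega)
  · intro i h1i h2i
    by_cases hi : i ≤ n1
    · simp only [if_pos hi, if_pos (by omega : i - 1 ≤ n1)]
      exact aw i h1i hi
    · by_cases hi' : i - 1 ≤ n1
      · have e : i - 1 = n1 := by omega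
        simp only [if_pos hi', if_neg hi, e]
        obtain ⟨k, hk⟩ := bw (i - n1) (by omega) (by omega)
        rw [show i - n1 - 1 = 0 by omega] at hk
        rw [if_pos le_rfl, a1, ← b0]
        exact ⟨k, hk⟩
      · simp only [if_neg hi, if_neg hi']
        obtain ⟨k, hk⟩ := bw (i - n1) (by omega) (by omega)
        rw [show i - 1 - n1 = i - n1 - 1 by omega]
        exact ⟨k, hk⟩

lemma DilRS_meet (t : L) {p q : L} (h : DilRS u₂ v₂ p q) :
    DilRS u₂ v₂ (p ⊓ t) (q ⊓ t) := by
  obtain ⟨n, x, a0, a1, am, aw⟩ := h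
  refine ⟨n, fun i => x i ⊓ t, by simp [a0], by simp [a1],
    fun i hi => inf_le_inf_right t (am i hi), fun i hi1 hi2 => ?_⟩
  obtain ⟨k, hk⟩ := aw i hi1 hi2
  exact ⟨k + 2, DilWP_meet hk t⟩

lemma DilRS_join (t : L) {p q : L} (h : DilRS u₂ v₂ p q) :
    DilRS u₂ v₂ (p ⊔ t) (q ⊔ t) := by
  obtain ⟨n, x, a0, a1, am, aw⟩ := h
  refine ⟨n, fun i => x i ⊔ t, by simp [a0], by simp [a1],
    fun i hi => sup_le_sup_right (am i hi) t, fun i hi1 hi2 => ?_⟩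
  obtain ⟨k, hk⟩ := aw i hi1 hi2
  exact ⟨k + 2, DilWP_join hk t⟩

lemma DilRS_sub {p q p' q' : L} (h : DilRS u₂ v₂ p q)
    (h1 : p ≤ p') (h2 : p' ≤ q') (h3 : q' ≤ q) : DilRS u₂ v₂ p' q' := by
  have m1 := DilRS_meet q' h
  rw [inf_eq_left.mpr (h1.trans h2), inf_eq_right.mpr h3] at m1
  have m2 := DilRS_join p' m1
  rwa [sup_eq_right.mpr h1, sup_eq_left.mpr h2] at m2

def DilRR (u₂ v₂ : L) (a b : L) : Prop := DilRS u₂ v₂ (a ⊓ b) (a ⊔ b)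

lemma DilRR_inf (t : L) {a b : L} (h : DilRR u₂ v₂ a b) : DilRR u₂ v₂ (a ⊓ t) (b ⊓ t) := by
  have m := DilRS_meet t h
  exact DilRS_sub m
    (le_inf (le_inf (inf_le_left.trans inf_le_left) inf_le_right)
      (le_inf (inf_le_left.trans inf_le_right) inf_le_right))
    (inf_le_left.trans le_sup_left)
    (sup_le (inf_le_inf_right t le_sup_left) (inf_le_inf_right t le_sup_right))

lemma DilRR_sup (t : L) {a b : L} (h : DilRR u₂ v₂ a b) : DilRR u₂ v₂ (a ⊔ t) (b ⊔ t) := by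
  have m := DilRS_join t h
  exact DilRS_sub m
    (le_inf (sup_le_sup_right inf_le_left t) (sup_le_sup_right inf_le_right t))
    (inf_le_left.trans le_sup_left)
    (sup_le (sup_le (le_sup_left.trans le_sup_left) le_sup_right)
      (sup_le (le_sup_right.trans le_sup_left) le_sup_right))

lemma DilRR_trans {a b c : L} (hab : DilRR u₂ v₂ a b) (hbc : DilRR u₂ v₂ b c) :
    DilRR u₂ v₂ a c := by
  have s1 : DilRS u₂ v₂ (a ⊓ b) b := DilRS_sub hab le_rfl inf_le_right le_sup_right
  have s3 : DilRS u₂ v₂ b (a ⊔ b) := DilRS_sub hab inf_le_right le_sup_right le_rfl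
  have t1 : DilRS u₂ v₂ ((a ⊓ b) ⊓ (b ⊓ c)) (b ⊓ (b ⊓ c)) := DilRS_meet (b ⊓ c) s1
  have t1' : DilRS u₂ v₂ (a ⊓ b ⊓ c) (b ⊓ c) :=
    DilRS_sub t1
      (le_inf inf_le_left (inf_le_right.trans inf_le_right))
      (le_inf (inf_le_left.trans inf_le_right) inf_le_right)
      (le_inf inf_le_left le_rfl)
  have t3 : DilRS u₂ v₂ (b ⊔ (b ⊔ c)) ((a ⊔ b) ⊔ (b ⊔ c)) := DilRS_join (b ⊔ c) s3
  have t3' : DilRS u₂ v₂ (b ⊔ c) (a ⊔ b ⊔ c) :=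
    DilRS_sub t3 (sup_le le_sup_left le_rfl)
      (sup_le (le_sup_right.trans le_sup_left) le_sup_right)
      (sup_le le_sup_left (le_sup_right.trans le_sup_right))
  have big : DilRS u₂ v₂ (a ⊓ b ⊓ c) (a ⊔ b ⊔ c) := DilRS_trans (DilRS_trans t1' hbc) t3'
  exact DilRS_sub big
    (le_inf (inf_le_left.trans inf_le_left) inf_le_right)
    (inf_le_left.trans le_sup_left)
    (sup_le (le_sup_left.trans le_sup_left) le_sup_right)

lemma DilRR_isLatCon : IsLatCon (DilRR u₂ v₂ : L → L → Prop) := by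
  refine ⟨⟨fun a => ?_, fun {a b} h => ?_, fun {a b c} h1 h2 => DilRR_trans h1 h2⟩,
    fun a b c d h1 h2 => ?_, fun a b c d h1 h2 => ?_⟩
  · show DilRS u₂ v₂ (a ⊓ a) (a ⊔ a)
    rw [inf_idem, sup_idem]; exact DilRS_refl a
  · show DilRS u₂ v₂ (b ⊓ a) (b ⊔ a)
    rw [inf_comm b a, sup_comm b a]; exact h
  · have g1 : DilRR u₂ v₂ (a ⊓ c) (b ⊓ c) := DilRR_inf c h1
    have g2 : DilRR u₂ v₂ (c ⊓ b) (d ⊓ b) := DilRR_inf b h2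
    rw [inf_comm c b, inf_comm d b] at g2
    exact DilRR_trans g1 g2
  · have g1 : DilRR u₂ v₂ (a ⊔ c) (b ⊔ c) := DilRR_sup c h1
    have g2 : DilRR u₂ v₂ (c ⊔ b) (d ⊔ b) := DilRR_sup b h2
    rw [sup_comm c b, sup_comm d b] at g2
    exact DilRR_trans g1 g2

lemma Dil_chain_mono (x : ℕ → L) {n : ℕ} (am : ∀ i < n, x i ≤ x (i+1))
    {i j : ℕ} (hij : i ≤ j) (hj : j ≤ n) : x i ≤ x j := by
  obtain ⟨d, rfl⟩ : ∃ d, j = i + d := ⟨j - i, by omega⟩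
  clear hij
  induction d with
  | zero => exact le_rfl
  | succ m ih => exact (ih (by omega)).trans (am (i+m) (by omega))

/-- Turn a `DilRS` witness into the "tied" form where the chain length and all
weaving lengths coincide. -/
lemma DilRS_tied {u₁ v₁ : L} (h₁ : u₁ ≤ v₁) (h₂ : u₂ ≤ v₂)
    (hRS : DilRS u₂ v₂ u₁ v₁) :
    ∃ (n : ℕ) (x : ℕ → L) (y z : ℕ → ℕ → L),
        x 0 = u₁ ∧ x n = v₁ ∧ (∀ i < n, x i ≤ x (i + 1)) ∧
        (∀ i, 1 ≤ i → i ≤ n → ∀ j ≤ n, y i j ≤ z i j) ∧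
        (∀ i, 1 ≤ i → i ≤ n →
          y i 0 = x (i - 1) ∧ z i 0 = x i ∧ y i n = u₂ ∧ z i n = v₂) ∧
        (∀ i, 1 ≤ i → i ≤ n → ∀ j, 1 ≤ j → j ≤ n → Odd j →
          y i (j - 1) = z i (j - 1) ⊓ y i j ∧ z i (j - 1) ≤ z i j) ∧
        (∀ i, 1 ≤ i → i ≤ n → ∀ j, 1 ≤ j → j ≤ n → Even j →
          z i (j - 1) = y i (j - 1) ⊔ z i j ∧ y i j ≤ y i (j - 1)) := by
  obtain ⟨n, x, a0, a1, am, aw⟩ := hRS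
  have aw' : ∀ i, ∃ k, 1 ≤ i → i ≤ n → DilWP u₂ v₂ k (x (i-1)) (x i) := by
    intro i
    by_cases hi : 1 ≤ i ∧ i ≤ n
    · obtain ⟨k, hk⟩ := aw i hi.1 hi.2
      exact ⟨k, fun _ _ => hk⟩
    · exact ⟨0, fun ha hb => absurd ⟨ha, hb⟩ hi⟩
  choose k hk using aw'
  set N : ℕ := max 2 (max n ((Finset.range (n+1)).sup k)) with hN
  have hN2 : 2 ≤ N := le_max_left _ _
  have hNn : n ≤ N := (le_max_left _ _).trans (le_max_right _ _)
  have hNk : ∀ i ≤ n, k i ≤ N := fun i hi =>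
    (Finset.le_sup (Finset.mem_range.mpr (by omega))).trans
      ((le_max_right _ _).trans (le_max_right _ _))
  set x' : ℕ → L := fun i => if i ≤ n then x i else v₁ with hx'
  have hx'le : ∀ i ≤ n, x' i = x i := fun i hi => if_pos hi
  have hx'gt : ∀ i, n ≤ i → x' i = v₁ := by
    intro i hi
    by_cases h : i ≤ n
    · rw [hx'le i h, show i = n by omega, a1]
    · exact if_neg h
  have row : ∀ i, 1 ≤ i → i ≤ N → DilWP u₂ v₂ N (x' (i-1)) (x' i) := by
    intro i hi1 hi2
    by_cases hin : i ≤ n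
    · rw [hx'le (i-1) (by omega), hx'le i hin]
      exact DilWP_mono h₂ (hNk i hin) (hk i hi1 hin)
    · rw [hx'gt (i-1) (by omega), hx'gt i (by omega)]
      exact DilWP_mono h₂ hN2 (DilWP_self h₂ v₁)
  have hyz : ∀ i, ∃ yy zz : ℕ → L, 1 ≤ i → i ≤ N →
      (yy 0 = x' (i-1) ∧ zz 0 = x' i ∧ yy N = u₂ ∧ zz N = v₂ ∧
       (∀ j ≤ N, yy j ≤ zz j) ∧
       (∀ j, 1 ≤ j → j ≤ N → Odd j → yy (j-1) = zz (j-1) ⊓ yy j ∧ zz (j-1) ≤ zz j) ∧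
       (∀ j, 1 ≤ j → j ≤ N → Even j → zz (j-1) = yy (j-1) ⊔ zz j ∧ yy j ≤ yy (j-1))) := by
    intro i
    by_cases hi : 1 ≤ i ∧ i ≤ N
    · obtain ⟨yy, zz, h'⟩ := row i hi.1 hi.2
      exact ⟨yy, zz, fun _ _ => h'⟩
    · exact ⟨fun _ => u₂, fun _ => u₂, fun ha hb => absurd ⟨ha, hb⟩ hi⟩
  choose y z hyz using hyz
  refine ⟨N, x', y, z, ?_, ?_, ?_, ?_, ?_, ?_, ?_⟩
  · rw [hx'le 0 (Nat.zero_le _), a0]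
  · exact hx'gt N hNn
  · intro i hi
    by_cases h1 : i + 1 ≤ n
    · rw [hx'le i (by omega), hx'le (i+1) h1]
      exact am i (by omega)
    · by_cases h2 : i ≤ n
      · rw [hx'le i h2, hx'gt (i+1) (by omega)]
        calc x i ≤ x n := Dil_chain_mono x am h2 le_rfl
          _ = v₁ := a1
      · rw [hx'gt i (by omega), hx'gt (i+1) (by omega)]
  · intro i hi1 hi2 j hj
    exact ((hyz i hi1 hi2).2.2.2.2.1) j hj
  · intro i hi1 hi2
    obtain ⟨e1, e2, e3, e4, _, _, _⟩ := hyz i hi1 hi2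
    exact ⟨e1, e2, e3, e4⟩
  · intro i hi1 hi2
    exact (hyz i hi1 hi2).2.2.2.2.2.1
  · intro i hi1 hi2
    exact (hyz i hi1 hi2).2.2.2.2.2.2

/-- Core of (iii) → (ii): a single row of the weaving collapses under any
congruence collapsing `(u₂, v₂)`. -/
lemma Dil_row_rel {r : L → L → Prop} (hr : IsLatCon r) (hru : r u₂ v₂)
    (N : ℕ) (y z : ℕ → L) (hN : y N = u₂) (hN' : z N = v₂)
    (hodd : ∀ j, 1 ≤ j → j ≤ N → Odd j → y (j-1) = z (j-1) ⊓ y j ∧ z (j-1) ≤ z j)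
    (heven : ∀ j, 1 ≤ j → j ≤ N → Even j → z (j-1) = y (j-1) ⊔ z j ∧ y j ≤ y (j-1)) :
    r (y 0) (z 0) := by
  obtain ⟨heq, hmeet, hjoin⟩ := hr
  have key : ∀ d, d ≤ N → r (y (N - d)) (z (N - d)) := by
    intro d
    induction d with
    | zero => intro _; simpa [hN, hN'] using hru
    | succ m ih =>
      intro hm
      have hj1 : 1 ≤ N - m := by omega
      have hj2 : N - m ≤ N := by omega
      have hNm : N - (m+1) = (N - m) - 1 := by omega
      rcases Nat.even_or_odd (N - m) with he | ho
      · obtain ⟨e1, e2⟩ := heven (N - m) hj1 hj2 he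
        have hrel : r (y ((N-m)-1) ⊔ y (N-m)) (y ((N-m)-1) ⊔ z (N-m)) :=
          hjoin _ _ _ _ (heq.refl _) (ih (by omega))
        rw [sup_eq_left.mpr e2] at hrel
        rw [hNm, ← e1] at *
        exact hrel
      · obtain ⟨e1, e2⟩ := hodd (N - m) hj1 hj2 ho
        have hrel : r (z ((N-m)-1) ⊓ y (N-m)) (z ((N-m)-1) ⊓ z (N-m)) :=
          hmeet _ _ _ _ (heq.refl _) (ih (by omega))
        rw [inf_eq_left.mpr e2] at hrel
        rw [hNm, ← e1] at *
        exact hrel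
  simpa using key N le_rfl

end DilAux

/-- Dilworth's description of principal congruences: the three conditions (i), (ii),
(iii) of Lemma 2.6 are equivalent. -/
theorem stmt6 {L : Type*} [Lattice L] (u₁ v₁ u₂ v₂ : L)
    (h₁ : u₁ ≤ v₁) (h₂ : u₂ ≤ v₂) :
    ((∀ x y : L, cg u₁ v₁ x y → cg u₂ v₂ x y) ↔ cg u₂ v₂ u₁ v₁) ∧
    (cg u₂ v₂ u₁ v₁ ↔
      ∃ (n : ℕ) (x : ℕ → L) (y z : ℕ → ℕ → L),
        x 0 = u₁ ∧ x n = v₁ ∧ (∀ i < n, x i ≤ x (i + 1)) ∧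
        (∀ i, 1 ≤ i → i ≤ n → ∀ j ≤ n, y i j ≤ z i j) ∧
        (∀ i, 1 ≤ i → i ≤ n →
          y i 0 = x (i - 1) ∧ z i 0 = x i ∧ y i n = u₂ ∧ z i n = v₂) ∧
        (∀ i, 1 ≤ i → i ≤ n → ∀ j, 1 ≤ j → j ≤ n → Odd j →
          y i (j - 1) = z i (j - 1) ⊓ y i j ∧ z i (j - 1) ≤ z i j) ∧
        (∀ i, 1 ≤ i → i ≤ n → ∀ j, 1 ≤ j → j ≤ n → Even j →
          z i (j - 1) = y i (j - 1) ⊔ z i j ∧ y i j ≤ y i (j - 1))) := by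
  constructor
  · constructor
    · intro h
      exact h u₁ v₁ (fun r _ ha => ha)
    · intro h x y hxy r hr hab
      exact hxy r hr (h r hr hab)
  · constructor
    · intro h
      have hbase : DilRR u₂ v₂ u₂ v₂ := by
        show DilRS u₂ v₂ (u₂ ⊓ v₂) (u₂ ⊔ v₂)
        rw [inf_eq_left.mpr h₂, sup_eq_right.mpr h₂]
        refine ⟨1, fun i => if i = 0 then u₂ else v₂, rfl, rfl, ?_, ?_⟩
        · intro i hi; rw [show i = 0 by omega]; simp [h₂]
        · intro i hi1 hi2
          rw [show i = 1 by omega]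
          exact ⟨0, by simpa using DilWP_zero h₂⟩
      have hR : DilRR u₂ v₂ u₁ v₁ := h _ DilRR_isLatCon hbase
      have hRS : DilRS u₂ v₂ u₁ v₁ := by
        have : DilRS u₂ v₂ (u₁ ⊓ v₁) (u₁ ⊔ v₁) := hR
        rwa [inf_eq_left.mpr h₁, sup_eq_right.mpr h₁] at this
      exact DilRS_tied h₁ h₂ hRS
    · rintro ⟨n, x, y, z, hx0, hxn, hmono, hle, hends, hodd, heven⟩ r hr hu
      have hrow : ∀ i, 1 ≤ i → i ≤ n → r (x (i-1)) (x i) := by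
        intro i hi1 hi2
        obtain ⟨e1, e2, e3, e4⟩ := hends i hi1 hi2
        have := Dil_row_rel hr hu n (y i) (z i) e3 e4 (hodd i hi1 hi2) (heven i hi1 hi2)
        rwa [e1, e2] at this
      have hch : ∀ m, m ≤ n → r (x 0) (x m) := by
        intro m
        induction m with
        | zero => intro _; exact hr.1.refl _
        | succ p ih =>
          intro hp
          exact hr.1.trans (ih (by omega))
            (by simpa using hrow (p+1) (by omega) hp)
      have := hch n le_rfl
      rwa [hx0, hxn] at this
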